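/- Let p = 2^{64} ⊕ r with r = 27. For any nonnegative integer x, x mod p = (((z div 2^{64}) ⋆ 2^{64}) mod p) ⊕ (z mod 2^{64}) ⊕ (x mod 2^{64}), where z = (x div 2^{64}) ⋆ r, and mod/div denote carry-less remainder and quotient. -/

import Mathlib

/-- Carry-less multiplication: `(a ⋆ b)ᵢ = ⨁ₖ a_{i-k} bₖ`. -/
def clmul : ℕ → ℕ → ℕ
  | 0, _ => 0
  | a + 1, b => (if (a + 1) % 2 = 1 then b else 0) ^^^ 2 * clmul ((a + 1) / 2) b
termination_by a _ => a
decreasing_by simp_wf; omega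

lemma clmul_zero_left (b : ℕ) : clmul 0 b = 0 := by simp [clmul]

lemma clmul_eq (n b : ℕ) : clmul n b = (n % 2) * b ^^^ 2 * clmul (n / 2) b := by
  match n with
  | 0 => simp [clmul]
  | a + 1 =>
    rw [clmul]
    rcases Nat.mod_two_eq_zero_or_one (a + 1) with h | h <;> simp [h]

lemma two_mul_xor (u v : ℕ) : 2 * (u ^^^ v) = 2 * u ^^^ 2 * v := by
  have h : ∀ x : ℕ, 2 * x = x <<< 1 := fun x => by
    rw [Nat.shiftLeft_eq, pow_one, Nat.mul_comm]
  rw [h, h, h]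
  apply Nat.eq_of_testBit_eq
  intro i
  simp only [Nat.testBit_shiftLeft, Nat.testBit_xor]
  cases decide (1 ≤ i) <;> simp

lemma mul_two_pow_xor (a b i : ℕ) (hb : b < 2 ^ i) : 2 ^ i * a ^^^ b = 2 ^ i * a + b := by
  rw [Nat.two_pow_add_eq_or_of_lt hb]
  apply Nat.eq_of_testBit_eq
  intro j
  simp only [Nat.testBit_xor, Nat.testBit_or]
  by_cases hj : i ≤ j
  · have : b.testBit j = false :=
      Nat.testBit_lt_two_pow (lt_of_lt_of_le hb (Nat.pow_le_pow_right (by norm_num) hj))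
    simp [this]
  · have : (2 ^ i * a).testBit j = false := by
      simp [Nat.testBit_two_pow_mul, hj]
    simp [this]

lemma mod_two_xor (a b : ℕ) : (a ^^^ b) % 2 = a % 2 ^^^ b % 2 := by
  have h := Nat.xor_mod_two_eq_one (a := a) (b := b)
  rcases Nat.mod_two_eq_zero_or_one a with h1 | h1 <;>
    rcases Nat.mod_two_eq_zero_or_one b with h2 | h2 <;>
      simp [h1, h2] at h ⊢ <;> omega


lemma clmul_two_pow (a k : ℕ) : clmul a (2 ^ k) = a * 2 ^ k := by
  induction a using Nat.strong_induction_on with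
  | _ a ih =>
    rcases Nat.eq_zero_or_pos a with rfl | ha
    · simp [clmul_zero_left]
    · rw [clmul_eq, ih (a / 2) (Nat.div_lt_self ha one_lt_two)]
      have h2 : 2 * (a / 2 * 2 ^ k) = 2 ^ (k + 1) * (a / 2) := by ring
      have hb : a % 2 * 2 ^ k < 2 ^ (k + 1) := by
        have : a % 2 ≤ 1 := by omega
        calc a % 2 * 2 ^ k ≤ 1 * 2 ^ k := by exact Nat.mul_le_mul_right _ this
          _ < 2 ^ (k + 1) := by
              have : 0 < 2 ^ k := by positivity
              rw [one_mul, pow_succ]; omega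
      rw [h2, Nat.xor_comm, mul_two_pow_xor _ _ _ hb]
      have key : a * 2 ^ k = 2 ^ (k + 1) * (a / 2) + a % 2 * 2 ^ k := by
        have h := Nat.div_add_mod a 2
        calc a * 2 ^ k = (2 * (a / 2) + a % 2) * 2 ^ k := by rw [h]
          _ = 2 ^ (k + 1) * (a / 2) + a % 2 * 2 ^ k := by ring
      rw [key]

lemma clmul_xor_left (a : ℕ) : ∀ b c, clmul (a ^^^ b) c = clmul a c ^^^ clmul b c := by
  induction a using Nat.strong_induction_on with
  | _ a ih =>
    intro b c
    rcases Nat.eq_zero_or_pos a with rfl | ha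
    · simp [clmul_zero_left]
    · rw [clmul_eq (a ^^^ b), Nat.xor_div_two, ih (a / 2) (Nat.div_lt_self ha one_lt_two),
        clmul_eq a, clmul_eq b, two_mul_xor, mod_two_xor]
      have hm : (a % 2 ^^^ b % 2) * c = a % 2 * c ^^^ b % 2 * c := by
        rcases Nat.mod_two_eq_zero_or_one a with h1 | h1 <;>
          rcases Nat.mod_two_eq_zero_or_one b with h2 | h2 <;> simp [h1, h2]
      rw [hm]
      simp only [Nat.xor_assoc]
      congr 1
      simp only [← Nat.xor_assoc]
      congr 1
      rw [Nat.xor_comm]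

lemma clmul_xor_right (a : ℕ) : ∀ b c, clmul a (b ^^^ c) = clmul a b ^^^ clmul a c := by
  induction a using Nat.strong_induction_on with
  | _ a ih =>
    intro b c
    rcases Nat.eq_zero_or_pos a with rfl | ha
    · simp [clmul_zero_left]
    · rw [clmul_eq a (b ^^^ c), clmul_eq a b, clmul_eq a c,
        ih (a / 2) (Nat.div_lt_self ha one_lt_two), two_mul_xor]
      have hm : a % 2 * (b ^^^ c) = a % 2 * b ^^^ a % 2 * c := by
        rcases Nat.mod_two_eq_zero_or_one a with h1 | h1 <;> simp [h1]
      rw [hm]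
      simp only [Nat.xor_assoc]
      congr 1
      simp only [← Nat.xor_assoc]
      congr 1
      rw [Nat.xor_comm]

lemma two_pow_le_of_testBit {n : ℕ} (i : ℕ) (h : n.testBit i = true) : 2 ^ i ≤ n := by
  apply Nat.le_of_testBit
  intro j hj
  have : j = i := by
    by_contra hne
    simp [Nat.testBit_two_pow, hne] at hj
    omega
  rwa [this]

lemma xor_ge (k c y : ℕ) (hc : c < 2 ^ k) (hy : 2 ^ k ≤ y) : 2 ^ k ≤ c ^^^ y := by
  have hy0 : y ≠ 0 := by
    have : 0 < 2 ^ k := by positivity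
    omega
  set i := Nat.log2 y with hi
  have h1 : 2 ^ i ≤ y := Nat.log2_self_le hy0
  have h2 : y < 2 ^ (i + 1) := Nat.lt_log2_self
  have hki : k ≤ i := by
    by_contra h
    push_neg at h
    have : 2 ^ (i + 1) ≤ 2 ^ k := Nat.pow_le_pow_right (by norm_num) (by omega)
    omega
  have hty : y.testBit i = true := by
    rw [Nat.testBit_eq_decide_div_mod_eq]
    have hdiv : y / 2 ^ i = 1 := by
      apply Nat.div_eq_of_lt_le <;> simpa [one_mul, two_mul] using by omega
    simp [hdiv]
  have htc : c.testBit i = false :=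
    Nat.testBit_lt_two_pow (lt_of_lt_of_le hc (Nat.pow_le_pow_right (by norm_num) hki))
  have hb : (c ^^^ y).testBit i = true := by
    simp [Nat.testBit_xor, hty, htc]
  calc 2 ^ k ≤ 2 ^ i := Nat.pow_le_pow_right (by norm_num) hki
    _ ≤ c ^^^ y := two_pow_le_of_testBit i hb

lemma clmul_ge (a b : ℕ) (ha : a ≠ 0) (hb : b ≠ 0) : 2 ^ Nat.log2 b ≤ clmul a b := by
  induction a using Nat.strong_induction_on with
  | _ a ih =>
    rcases Nat.lt_or_ge a 2 with h2 | h2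
    · have : a = 1 := by omega
      subst this
      rw [clmul_eq]
      simp [clmul_zero_left, Nat.log2_self_le hb]
    · have hd : a / 2 ≠ 0 := by omega
      have hih := ih (a / 2) (Nat.div_lt_self (by omega) one_lt_two) hd
      have hy : 2 ^ (Nat.log2 b) ≤ 2 * clmul (a / 2) b := by omega
      have hcb : a % 2 * b < 2 ^ (Nat.log2 b + 1) := by
        have : a % 2 * b ≤ b := by
          have : a % 2 ≤ 1 := by omega
          calc a % 2 * b ≤ 1 * b := Nat.mul_le_mul_right _ this
            _ = b := one_mul b
        have := Nat.lt_log2_self (n := b)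
        omega
      rw [clmul_eq]
      have hy2 : 2 ^ (Nat.log2 b + 1) ≤ 2 * clmul (a / 2) b := by
        rw [pow_succ]
        have := hih
        omega
      have := xor_ge (Nat.log2 b + 1) (a % 2 * b) (2 * clmul (a / 2) b) hcb hy2
      calc 2 ^ Nat.log2 b ≤ 2 ^ (Nat.log2 b + 1) := Nat.pow_le_pow_right (by norm_num) (by omega)
        _ ≤ _ := this

lemma xor_swap {X Y r s : ℕ} (h : X ^^^ r = Y ^^^ s) : X ^^^ Y = r ^^^ s := by
  apply Nat.eq_of_testBit_eq
  intro i
  have h2 := congrArg (fun n => n.testBit i) h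
  simp only [Nat.testBit_xor] at h2 ⊢
  cases hX : X.testBit i <;> cases hr : r.testBit i <;> cases hY : Y.testBit i <;>
    cases hs : s.testBit i <;> simp_all

/-- Reduction formula modulo p = 2^64 ⊕ 27: with z = (x div 2^64) ⋆ 27,
x mod p = ((z div 2^64) ⋆ 2^64) mod p ⊕ (z mod 2^64) ⊕ (x mod 2^64). -/
theorem stmt11 (cldiv clmod : ℕ → ℕ → ℕ)
    (hchar : ∀ a b : ℕ, b ≠ 0 →
      a = clmul (cldiv a b) b ^^^ clmod a b ∧ clmod a b < 2 ^ Nat.log2 b)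
    (x : ℕ) :
    clmod x (2 ^ 64 ^^^ 27) =
      clmod (clmul (cldiv (clmul (cldiv x (2 ^ 64)) 27) (2 ^ 64)) (2 ^ 64)) (2 ^ 64 ^^^ 27) ^^^
        clmod (clmul (cldiv x (2 ^ 64)) 27) (2 ^ 64) ^^^ clmod x (2 ^ 64) := by
  have hpow : (0:ℕ) < 2 ^ 64 := by positivity
  have hpadd : (2 ^ 64 ^^^ 27 : ℕ) = 2 ^ 64 + 27 := by
    have := mul_two_pow_xor 1 27 64 (by norm_num)
    simpa using this
  set p : ℕ := 2 ^ 64 ^^^ 27 with hp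
  have hp0 : p ≠ 0 := by omega
  have h640 : (2:ℕ) ^ 64 ≠ 0 := by omega
  have hlogp : Nat.log2 p = 64 := by
    rw [Nat.log2_eq_log_two]
    apply Nat.log_eq_of_pow_le_of_lt_pow
    · omega
    · have : (2:ℕ) ^ (64 + 1) = 2 * 2 ^ 64 := by ring
      omega
  have hlog64 : Nat.log2 ((2:ℕ) ^ 64) = 64 := by
    rw [Nat.log2_eq_log_two]
    apply Nat.log_eq_of_pow_le_of_lt_pow
    · exact le_refl _
    · have : (2:ℕ) ^ (64 + 1) = 2 * 2 ^ 64 := by ring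
      omega
  obtain ⟨hx1, hx2⟩ := hchar x (2 ^ 64) h640
  set q := cldiv x (2 ^ 64) with hq
  set m := clmod x (2 ^ 64) with hm
  set z := clmul q 27 with hz
  obtain ⟨hz1, hz2⟩ := hchar z (2 ^ 64) h640
  set q2 := cldiv z (2 ^ 64) with hq2
  set m2 := clmod z (2 ^ 64) with hm2
  set w := clmul q2 (2 ^ 64) with hw
  obtain ⟨hw1, hw2⟩ := hchar w p hp0
  set q3 := cldiv w p with hq3
  set r3 := clmod w p with hr3
  obtain ⟨hxp1, hxp2⟩ := hchar x p hp0
  rw [hlog64] at hx2 hz2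
  rw [hlogp] at hw2 hxp2
  -- key equality of two representations
  have key : clmul (cldiv x p) p ^^^ clmod x p = clmul (q ^^^ q3) p ^^^ (r3 ^^^ m2 ^^^ m) := by
    rw [← hxp1, clmul_xor_left]
    have e27 : p ^^^ 27 = 2 ^ 64 := by
      rw [hp, Nat.xor_assoc, Nat.xor_self, Nat.xor_zero]
    calc x = clmul q (2 ^ 64) ^^^ m := hx1
      _ = clmul q (p ^^^ 27) ^^^ m := by rw [e27]
      _ = (clmul q p ^^^ clmul q 27) ^^^ m := by rw [clmul_xor_right]
      _ = (clmul q p ^^^ (w ^^^ m2)) ^^^ m := by rw [← hz1]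
      _ = (clmul q p ^^^ ((clmul q3 p ^^^ r3) ^^^ m2)) ^^^ m := by rw [← hw1]
      _ = clmul q p ^^^ clmul q3 p ^^^ (r3 ^^^ m2 ^^^ m) := by
          simp only [Nat.xor_assoc]
  have heq : clmul (cldiv x p ^^^ (q ^^^ q3)) p = clmod x p ^^^ (r3 ^^^ m2 ^^^ m) := by
    rw [clmul_xor_left]
    exact xor_swap key
  have hlt : clmod x p ^^^ (r3 ^^^ m2 ^^^ m) < 2 ^ 64 :=
    Nat.xor_lt_two_pow hxp2 (Nat.xor_lt_two_pow (Nat.xor_lt_two_pow hw2 hz2) hx2)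
  by_cases hd0 : cldiv x p ^^^ (q ^^^ q3) = 0
  · rw [hd0, clmul_zero_left] at heq
    have := xor_eq_zero_iff.mp heq.symm
    exact this
  · exfalso
    have := clmul_ge _ p hd0 hp0
    rw [hlogp] at this
    omega
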